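/- Let X, Y1, Y2 be finite sets of complex numbers with |Y1| ≥ 2 and |Y2| ≥ 2 such that (X, Y1) and (X, Y2) are uniquely factorable constellation pairs. Then for any two distinct triples (x, y1, y2) ≠ (x̂, ŷ1, ŷ2) in X × Y1 × Y2, the 4×4 complex matrix (U(x, y1, y2) | U(x̂, ŷ1, ŷ2)), obtained by juxtaposing the columns of the two codeword matrices, is invertible; equivalently, the Gram matrix R = (U | Û)^H (U | Û) is nonsingular. (This is the algebraic condition guaranteeing full diversity of the code for the noncoherent ML receiver.) -/

import Mathlib

/-- A pair `(X, Y)` of sets of complex numbers is a uniquely factorable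
constellation pair (UFCP) if `x * y' = x' * y` with `x, x' ∈ X` and
`y, y' ∈ Y` implies `x = x'` and `y = y'`. -/
def IsUFCP (X Y : Set ℂ) : Prop :=
  ∀ x ∈ X, ∀ x' ∈ X, ∀ y ∈ Y, ∀ y' ∈ Y, x * y' = x' * y → x = x' ∧ y = y'

/-- The normalized `4 × 2` unitary UFCP space-time codeword matrix
`U(x, y₁, y₂)`. -/
noncomputable def Umat (x y1 y2 : ℂ) : Matrix (Fin 4) (Fin 2) ℂ :=
  (((Real.sqrt (‖x‖ ^ 2 + ‖y1‖ ^ 2 + ‖y2‖ ^ 2))⁻¹ : ℝ) : ℂ) •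
    !![x, 0; 0, starRingEnd ℂ x; y1, y2; -(starRingEnd ℂ y2), starRingEnd ℂ y1]

/-- The `4 × 4` matrix `(A | B)` obtained by juxtaposing the columns of two
`4 × 2` matrices. -/
def juxt (A B : Matrix (Fin 4) (Fin 2) ℂ) : Matrix (Fin 4) (Fin 4) ℂ :=
  Matrix.of fun i j =>
    if h : (j : ℕ) < 2 then A i ⟨(j : ℕ), h⟩ else B i ⟨(j : ℕ) - 2, by omega⟩


lemma my_det_fin_four (A : Matrix (Fin 4) (Fin 4) ℂ) :
    A.det =
      A 0 0 * A 1 1 * A 2 2 * A 3 3 - A 0 0 * A 1 1 * A 2 3 * A 3 2 -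
        A 0 0 * A 1 2 * A 2 1 * A 3 3 + A 0 0 * A 1 2 * A 2 3 * A 3 1 +
        A 0 0 * A 1 3 * A 2 1 * A 3 2 - A 0 0 * A 1 3 * A 2 2 * A 3 1 -
        A 0 1 * A 1 0 * A 2 2 * A 3 3 + A 0 1 * A 1 0 * A 2 3 * A 3 2 +
        A 0 1 * A 1 2 * A 2 0 * A 3 3 - A 0 1 * A 1 2 * A 2 3 * A 3 0 -
        A 0 1 * A 1 3 * A 2 0 * A 3 2 + A 0 1 * A 1 3 * A 2 2 * A 3 0 +
        A 0 2 * A 1 0 * A 2 1 * A 3 3 - A 0 2 * A 1 0 * A 2 3 * A 3 1 -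
        A 0 2 * A 1 1 * A 2 0 * A 3 3 + A 0 2 * A 1 1 * A 2 3 * A 3 0 +
        A 0 2 * A 1 3 * A 2 0 * A 3 1 - A 0 2 * A 1 3 * A 2 1 * A 3 0 -
        A 0 3 * A 1 0 * A 2 1 * A 3 2 + A 0 3 * A 1 0 * A 2 2 * A 3 1 +
        A 0 3 * A 1 1 * A 2 0 * A 3 2 - A 0 3 * A 1 1 * A 2 2 * A 3 0 -
        A 0 3 * A 1 2 * A 2 0 * A 3 1 + A 0 3 * A 1 2 * A 2 1 * A 3 0 := by
  rw [Matrix.det_succ_row_zero]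
  simp [Fin.sum_univ_succ, Matrix.det_fin_three, Matrix.submatrix_apply, Fin.succAbove,
    show ((2:Fin 3).succ = (3:Fin 4)) by rfl,
    show (Fin.castSucc (2:Fin 3) = (2:Fin 4)) by rfl,
    show (Fin.castSucc (1:Fin 3) = (1:Fin 4)) by rfl,
    show (Fin.castSucc (0:Fin 3) = (0:Fin 4)) by rfl,
    show ((1:Fin 3).succ = (2:Fin 4)) by rfl, show ((0:Fin 3).succ = (1:Fin 4)) by rfl]
  ring

lemma juxt_c0 (A B : Matrix (Fin 4) (Fin 2) ℂ) (i : Fin 4) : juxt A B i 0 = A i 0 := rfl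
lemma juxt_c1 (A B : Matrix (Fin 4) (Fin 2) ℂ) (i : Fin 4) : juxt A B i 1 = A i 1 := rfl
lemma juxt_c2 (A B : Matrix (Fin 4) (Fin 2) ℂ) (i : Fin 4) : juxt A B i 2 = B i 0 := rfl
lemma juxt_c3 (A B : Matrix (Fin 4) (Fin 2) ℂ) (i : Fin 4) : juxt A B i 3 = B i 1 := rfl

lemma det_juxt_umat (x x' y1 y1' y2 y2' : ℂ) :
    (juxt (Umat x y1 y2) (Umat x' y1' y2')).det =
      (((Real.sqrt (‖x‖ ^ 2 + ‖y1‖ ^ 2 + ‖y2‖ ^ 2))⁻¹ : ℝ) : ℂ)^2 *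
      (((Real.sqrt (‖x'‖ ^ 2 + ‖y1'‖ ^ 2 + ‖y2'‖ ^ 2))⁻¹ : ℝ) : ℂ)^2 *
      ((x*y1'-x'*y1) * starRingEnd ℂ (x*y1'-x'*y1) +
       (starRingEnd ℂ x * y2' - starRingEnd ℂ x' * y2) *
       starRingEnd ℂ (starRingEnd ℂ x * y2' - starRingEnd ℂ x' * y2)) := by
  rw [my_det_fin_four]
  simp only [juxt_c0, juxt_c1, juxt_c2, juxt_c3, Umat, Matrix.smul_apply, smul_eq_mul,
    map_sub, map_mul, Complex.conj_conj]
  simp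
  ring

/-- Full-diversity condition: for any two distinct triples of signals, the
`4 × 4` matrix obtained by juxtaposing the two codeword matrices is
invertible; equivalently, the Gram matrix `(U | Û)ᴴ (U | Û)` is nonsingular. -/
theorem ufcp_full_diversity (X Y1 Y2 : Finset ℂ)
    (hY1 : 2 ≤ Y1.card) (hY2 : 2 ≤ Y2.card)
    (h1 : IsUFCP (X : Set ℂ) (Y1 : Set ℂ)) (h2 : IsUFCP (X : Set ℂ) (Y2 : Set ℂ))
    (x x' y1 y1' y2 y2' : ℂ)
    (hx : x ∈ X) (hx' : x' ∈ X) (hy1 : y1 ∈ Y1) (hy1' : y1' ∈ Y1)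
    (hy2 : y2 ∈ Y2) (hy2' : y2' ∈ Y2)
    (hne : (x, y1, y2) ≠ (x', y1', y2')) :
    IsUnit (juxt (Umat x y1 y2) (Umat x' y1' y2')) ∧
    IsUnit ((juxt (Umat x y1 y2) (Umat x' y1' y2')).conjTranspose *
      juxt (Umat x y1 y2) (Umat x' y1' y2')) := by
  -- every element of X is nonzero
  have hX0 : ∀ z ∈ X, z ≠ 0 := by
    intro z hz hz0
    obtain ⟨a, ha, b, hb, hab⟩ := Finset.one_lt_card.mp (by omega : 1 < Y1.card)
    exact hab ((h1 z (by simpa using hz) z (by simpa using hz) b (by simpa using hb)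
      a (by simpa using ha) (by rw [hz0]; ring)).2).symm
  have hx0 : x ≠ 0 := hX0 x hx
  have hx'0 : x' ≠ 0 := hX0 x' hx'
  -- the two scalar factors are nonzero
  have hr : (((Real.sqrt (‖x‖ ^ 2 + ‖y1‖ ^ 2 + ‖y2‖ ^ 2))⁻¹ : ℝ) : ℂ) ≠ 0 := by
    have : (0:ℝ) < ‖x‖ ^ 2 + ‖y1‖ ^ 2 + ‖y2‖ ^ 2 := by
      have : 0 < ‖x‖ := norm_pos_iff.mpr hx0
      positivity
    have h := Real.sqrt_pos.mpr this
    exact_mod_cast (inv_pos.mpr h).ne'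
  have hr' : (((Real.sqrt (‖x'‖ ^ 2 + ‖y1'‖ ^ 2 + ‖y2'‖ ^ 2))⁻¹ : ℝ) : ℂ) ≠ 0 := by
    have : (0:ℝ) < ‖x'‖ ^ 2 + ‖y1'‖ ^ 2 + ‖y2'‖ ^ 2 := by
      have : 0 < ‖x'‖ := norm_pos_iff.mpr hx'0
      positivity
    have h := Real.sqrt_pos.mpr this
    exact_mod_cast (inv_pos.mpr h).ne'
  -- the core factor is nonzero
  set e1 : ℂ := x * y1' - x' * y1 with he1
  set e2 : ℂ := starRingEnd ℂ x * y2' - starRingEnd ℂ x' * y2 with he2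
  have hcore : e1 * starRingEnd ℂ e1 + e2 * starRingEnd ℂ e2 ≠ 0 := by
    have hkey : e1 ≠ 0 ∨ e2 ≠ 0 := by
      by_contra hc
      push_neg at hc
      obtain ⟨hc1, hc2⟩ := hc
      have hxy : x * y1' = x' * y1 := sub_eq_zero.mp hc1
      obtain ⟨hxx, hyy⟩ := h1 x (by simpa using hx) x' (by simpa using hx')
        y1 (by simpa using hy1) y1' (by simpa using hy1') hxy
      have hxy2 : starRingEnd ℂ x * y2' = starRingEnd ℂ x * y2 := by
        have hcxx : starRingEnd ℂ x = starRingEnd ℂ x' := by rw [hxx]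
        rw [he2] at hc2
        linear_combination hc2 - y2 * hcxx
      have hy2eq : y2' = y2 := by
        have : starRingEnd ℂ x ≠ 0 := by simpa using hx0
        exact mul_left_cancel₀ this hxy2
      exact hne (by rw [hxx, hyy, hy2eq])
    rw [Complex.mul_conj, Complex.mul_conj]
    rw [← Complex.ofReal_add]
    simp only [ne_eq, Complex.ofReal_eq_zero]
    have h1' : 0 ≤ Complex.normSq e1 := Complex.normSq_nonneg e1
    have h2' : 0 ≤ Complex.normSq e2 := Complex.normSq_nonneg e2
    rcases hkey with h | h
    · have := Complex.normSq_pos.mpr h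
      positivity
    · have := Complex.normSq_pos.mpr h
      positivity
  have hdet : (juxt (Umat x y1 y2) (Umat x' y1' y2')).det ≠ 0 := by
    rw [det_juxt_umat]
    exact mul_ne_zero (mul_ne_zero (pow_ne_zero _ hr) (pow_ne_zero _ hr')) hcore
  have hu : IsUnit (juxt (Umat x y1 y2) (Umat x' y1' y2')) := by
    rw [Matrix.isUnit_iff_isUnit_det]
    exact isUnit_iff_ne_zero.mpr hdet
  refine ⟨hu, IsUnit.mul ?_ hu⟩
  rw [Matrix.isUnit_iff_isUnit_det, Matrix.det_conjTranspose]
  exact isUnit_iff_ne_zero.mpr (star_ne_zero.mpr hdet)
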